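/- There is an absolute constant \gamma'' > 0 such that the following holds. Let G be a d-regular bipartite graph with parts X and Y, let w and t \ge 1 be integers, and let (S,T) \in 2^X \times 2^Y satisfy |S| \le |T|. Then the number of sets A \in \mathcal{G}(w,t) with [A] \subseteq S and T \subseteq N(A) is at most 2^{w - \gamma'' t}. -/

import Mathlib

open scoped Classical

noncomputable section

variable {V : Type*}

/-- The square of a graph: vertices at distance 1 or 2 are adjacent. -/
def gsq (G : SimpleGraph V) : SimpleGraph V where
  Adj u v := u ≠ v ∧ (G.Adj u v ∨ ∃ w, G.Adj u w ∧ G.Adj w v)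
  symm := by
    refine ⟨?_⟩
    rintro u v ⟨h1, h2⟩
    refine ⟨h1.symm, ?_⟩
    rcases h2 with h | ⟨w, hw1, hw2⟩
    · exact Or.inl h.symm
    · exact Or.inr ⟨w, hw2.symm, hw1.symm⟩
  loopless := by refine ⟨?_⟩; rintro u ⟨h, -⟩; exact h rfl

/-- `A` is 2-linked: the subgraph of the square of `G` induced on `A` is connected. -/
def TwoLinked (G : SimpleGraph V) (A : Finset V) : Prop :=
  ((gsq G).induce (A : Set V)).Connected

variable [Fintype V] [DecidableEq V]

/-- The neighborhood of a vertex, as a `Finset`. -/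
def nbrF (G : SimpleGraph V) (v : V) : Finset V :=
  Finset.univ.filter (fun u => G.Adj v u)

/-- The neighborhood `N(A)` of a set of vertices. -/
def nbr (G : SimpleGraph V) (A : Finset V) : Finset V :=
  Finset.univ.filter (fun u => ∃ a ∈ A, G.Adj a u)

/-- The closure `[A] = {x ∈ X : N(x) ⊆ N(A)}` of `A` within the part `X`. -/
def cl (G : SimpleGraph V) (X A : Finset V) : Finset V :=
  X.filter (fun x => nbrF G x ⊆ nbr G A)

/-- `A` is closed (within the part `X`) if `[A] = A`. -/
def IsClosedSet (G : SimpleGraph V) (X A : Finset V) : Prop :=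
  cl G X A = A

/-- The 2-linked components of `A`: equivalence classes of the reachability
relation in the square of `G` restricted to `A`. -/
def comps (G : SimpleGraph V) (A : Finset V) : Finset (Finset V) :=
  A.image (fun a =>
    A.filter (fun b => Relation.ReflTransGen
      (fun u v => (gsq G).Adj u v ∧ u ∈ A ∧ v ∈ A) a b))

/-- The number of independent sets of `G` (including the empty set). -/
def numInd (G : SimpleGraph V) : ℕ :=
  (Finset.univ.filter (fun s : Finset V => ∀ u ∈ s, ∀ v ∈ s, ¬ G.Adj u v)).card

/-- `A ⊆ X` is `t`-contracting if `|N(A)| < |[A]| + t`. -/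
def Contracting (G : SimpleGraph V) (X : Finset V) (t : ℤ) (A : Finset V) : Prop :=
  ((nbr G A).card : ℤ) < ((cl G X A).card : ℤ) + t

/-- `D_A`: product over the 2-linked components `A'` of `A` of the number of
2-linked `B ⊆ A'` with `N(B) = N(A')`. -/
def DA (G : SimpleGraph V) (A : Finset V) : ℕ :=
  ∏ A' ∈ comps G A,
    (A'.powerset.filter (fun B => TwoLinked G B ∧ nbr G B = nbr G A')).card

/-- The value `|∇(C)|` of the cut `C`: the number of edges with exactly one
endpoint in `C`. -/
def cutVal (G : SimpleGraph V) (C : Finset V) : ℕ :=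
  ∑ u ∈ C, (nbrF G u \ C).card

/-- `B` is a polymer of `P_A` (a nonempty 2-linked subset of `X_A = X \ N²(A)`)
that is not `t0`-contracting. -/
def IsPolymerIn (G : SimpleGraph V) (X : Finset V) (t0 : ℤ) (A B : Finset V) : Prop :=
  B.Nonempty ∧ TwoLinked G B ∧ B ⊆ X \ nbr G (nbr G A) ∧ ¬ Contracting G X t0 B

/-- `Ξ_A`: sum over unordered compatible collections of non-`t0`-contracting
polymers from `P_A` of `2^{-∑|N(B_i)|}`. -/
def Xi (G : SimpleGraph V) (X : Finset V) (t0 : ℤ) (A : Finset V) : ℝ :=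
  ∑ F ∈ Finset.univ.filter (fun F : Finset (Finset V) =>
      (∀ B ∈ F, IsPolymerIn G X t0 A B) ∧
      (∀ B ∈ F, ∀ B' ∈ F, B ≠ B' → Disjoint (nbr G B) (nbr G B'))),
    ∏ B ∈ F, ((2:ℝ) ^ (nbr G B).card)⁻¹

/-- `𝒢(w,t)`: polymers `B ⊆ X` with `|N(B)| = w` and `|N(B)| - |[B]| = t`. -/
def GG (G : SimpleGraph V) (X : Finset V) (w t : ℤ) : Finset (Finset V) :=
  X.powerset.filter (fun B => B.Nonempty ∧ TwoLinked G B ∧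
    ((nbr G B).card : ℤ) = w ∧ ((nbr G B).card : ℤ) - ((cl G X B).card : ℤ) = t)

/-- `G` is bipartite with parts `X` and `Y`. -/
def IsBipartiteWith (G : SimpleGraph V) (X Y : Finset V) : Prop :=
  Disjoint X Y ∧ X ∪ Y = Finset.univ ∧
    ∀ u v, G.Adj u v → (u ∈ X ∧ v ∈ Y) ∨ (u ∈ Y ∧ v ∈ X)

/-- `G` is `d`-regular. -/
def IsRegularDeg (G : SimpleGraph V) (d : ℕ) : Prop :=
  ∀ v, (nbrF G v).card = d

/-- `d_S(v)`: number of neighbors of `v` in `S`. -/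
def degIn (G : SimpleGraph V) (v : V) (S : Finset V) : ℕ := (nbrF G v ∩ S).card

/-- `W_{d/2}`: vertices of `N(A)` with at least `d/2` neighbors in `A`. -/
def Wbig (G : SimpleGraph V) (d : ℕ) (A : Finset V) : Finset V :=
  (nbr G A).filter (fun y => (d : ℝ) / 2 ≤ (degIn G y A : ℝ))

/-- `F` is an essential set for `A`: `N(A) ⊇ F ⊇ W_{d/2}` and `N(F) ⊇ [A]`. -/
def EssentialSet (G : SimpleGraph V) (X : Finset V) (d : ℕ) (A F : Finset V) : Prop :=
  F ⊆ nbr G A ∧ Wbig G d A ⊆ F ∧ cl G X A ⊆ nbr G F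

/-- `(S,T)` is a `γ'`-container for `A`, where `t = |N(A)| - |[A]|`. -/
def IsContainer (G : SimpleGraph V) (X Y : Finset V) (d : ℕ) (γ' : ℝ)
    (A S T : Finset V) : Prop :=
  cl G X A ⊆ S ∧ Wbig G d A ⊆ T ∧ T ⊆ nbr G A ∧
  (∀ v ∈ S, (degIn G v (Y \ T) : ℝ) ≤
      γ' * (((nbr G A).card : ℝ) - ((cl G X A).card : ℝ))) ∧
  (∀ v ∈ Y \ T, (degIn G v S : ℝ) ≤
      γ' * (((nbr G A).card : ℝ) - ((cl G X A).card : ℝ)))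

section AbstractLemma

variable {α β : Type*} [DecidableEq α]

private lemma erase_subset_erase_iff' {s E : Finset α} {p : α} (hpE : p ∈ E) :
    s.erase p ⊆ E.erase p ↔ s ⊆ E := by
  constructor
  · intro h y hy
    by_cases hyp : y = p
    · exact hyp ▸ hpE
    · exact Finset.mem_of_mem_erase (h (Finset.mem_erase.2 ⟨hyp, hy⟩))
  · exact fun h => Finset.erase_subset_erase _ h

/-- Abstract counting lemma: if every `E` in a family has size `r`, every `E` has
exactly `ρ` "excluded" indices (those `x` with `φ x ⊄ E`), and every point of every
`E` is covered by some `φ x ⊆ E`, then the family has at most `(ρ+r).choose r`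
members. -/
private lemma abstract_count :
    ∀ (n ρ r : ℕ), ρ + r ≤ n → ∀ (𝒰 : Finset β) (φ : β → Finset α) (ℰ : Finset (Finset α)),
      (∀ E ∈ ℰ, E.card = r) →
      (∀ E ∈ ℰ, (𝒰.filter fun x => ¬ φ x ⊆ E).card = ρ) →
      (∀ E ∈ ℰ, ∀ p ∈ E, ∃ x ∈ 𝒰, p ∈ φ x ∧ φ x ⊆ E) →
      ℰ.card ≤ (ρ + r).choose r := by
  intro n
  induction n with
  | zero =>
      intro ρ r hn 𝒰 φ ℰ h1 _ _
      have hr : r = 0 := by omega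
      subst hr
      have hsub : ℰ ⊆ {∅} := fun E hE =>
        Finset.mem_singleton.2 (Finset.card_eq_zero.1 (h1 E hE))
      calc ℰ.card ≤ ({∅} : Finset (Finset α)).card := Finset.card_le_card hsub
        _ = 1 := Finset.card_singleton _
        _ ≤ (ρ + 0).choose 0 := by simp
  | succ n ih =>
      intro ρ r hn 𝒰 φ ℰ h1 h2 h3
      cases r with
      | zero =>
          have hsub : ℰ ⊆ {∅} := fun E hE =>
            Finset.mem_singleton.2 (Finset.card_eq_zero.1 (h1 E hE))
          calc ℰ.card ≤ ({∅} : Finset (Finset α)).card := Finset.card_le_card hsub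
            _ = 1 := Finset.card_singleton _
            _ ≤ (ρ + 0).choose 0 := by simp
      | succ r' =>
          rcases ℰ.eq_empty_or_nonempty with rfl | ⟨E₀, hE₀⟩
          · simp
          have hE₀card := h1 E₀ hE₀
          have hE₀ne : E₀.Nonempty := Finset.card_pos.1 (by omega)
          obtain ⟨p, hp⟩ := hE₀ne
          obtain ⟨x₀, hx₀U, hpx₀, _⟩ := h3 E₀ hE₀ p hp
          set u := (𝒰.filter fun x => p ∈ φ x).card with hu_def
          have hu1 : 1 ≤ u := by
            rw [hu_def]
            exact Finset.card_pos.2 ⟨x₀, Finset.mem_filter.2 ⟨hx₀U, hpx₀⟩⟩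
          set ℰ₁ := ℰ.filter (fun E => p ∈ E) with hℰ₁
          set ℰ₂ := ℰ.filter (fun E => p ∉ E) with hℰ₂
          have hsplit : ℰ₁.card + ℰ₂.card = ℰ.card :=
            Finset.card_filter_add_card_filter_not _
          have hbound1 : ℰ₁.card ≤ (ρ + r').choose r' := by
            have hinj : Set.InjOn (fun E : Finset α => E.erase p) ℰ₁ := by
              intro a ha b hb hab
              have hpa : p ∈ a := (Finset.mem_filter.1 ha).2
              have hpb : p ∈ b := (Finset.mem_filter.1 hb).2
              have : insert p (a.erase p) = insert p (b.erase p) := by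
                simp only at hab; rw [hab]
              rwa [Finset.insert_erase hpa, Finset.insert_erase hpb] at this
            have hcard_img : (ℰ₁.image (fun E => E.erase p)).card = ℰ₁.card :=
              Finset.card_image_of_injOn hinj
            rw [← hcard_img]
            apply ih ρ r' (by omega) 𝒰 (fun x => (φ x).erase p)
            · intro E' hE'
              obtain ⟨E, hE, rfl⟩ := Finset.mem_image.1 hE'
              have hpE : p ∈ E := (Finset.mem_filter.1 hE).2
              have hEℰ : E ∈ ℰ := (Finset.mem_filter.1 hE).1
              rw [Finset.card_erase_of_mem hpE, h1 E hEℰ]; omega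
            · intro E' hE'
              obtain ⟨E, hE, rfl⟩ := Finset.mem_image.1 hE'
              have hpE : p ∈ E := (Finset.mem_filter.1 hE).2
              have hEℰ : E ∈ ℰ := (Finset.mem_filter.1 hE).1
              have heq : (𝒰.filter fun x => ¬ (φ x).erase p ⊆ E.erase p)
                  = (𝒰.filter fun x => ¬ φ x ⊆ E) :=
                Finset.filter_congr (fun x _ => by rw [erase_subset_erase_iff' hpE])
              rw [heq]
              exact h2 E hEℰ
            · intro E' hE' q hq
              obtain ⟨E, hE, rfl⟩ := Finset.mem_image.1 hE'
              have hEℰ : E ∈ ℰ := (Finset.mem_filter.1 hE).1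
              have hqE : q ∈ E := Finset.mem_of_mem_erase hq
              have hqp : q ≠ p := (Finset.mem_erase.1 hq).1
              obtain ⟨x, hxU, hqφ, hφE⟩ := h3 E hEℰ q hqE
              exact ⟨x, hxU, Finset.mem_erase.2 ⟨hqp, hqφ⟩, Finset.erase_subset_erase _ hφE⟩
          have hbound2 : ℰ₂.card ≤ (ρ + r').choose (r' + 1) := by
            rcases ℰ₂.eq_empty_or_nonempty with h2e | ⟨E₂, hE₂'⟩
            · rw [h2e]; simp
            · have hE₂ℰ : E₂ ∈ ℰ := (Finset.mem_filter.1 hE₂').1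
              have hpE₂ : p ∉ E₂ := (Finset.mem_filter.1 hE₂').2
              have huρ : u ≤ ρ := by
                rw [hu_def, ← h2 E₂ hE₂ℰ]
                apply Finset.card_le_card
                intro x hx
                obtain ⟨hxU, hpx⟩ := Finset.mem_filter.1 hx
                exact Finset.mem_filter.2 ⟨hxU, fun hsub => hpE₂ (hsub hpx)⟩
              have hkey : ∀ E ∈ ℰ₂,
                  (((𝒰.filter fun x => p ∉ φ x)).filter fun x => ¬ φ x ⊆ E).card = ρ - u := by
                intro E hE
                have hEℰ : E ∈ ℰ := (Finset.mem_filter.1 hE).1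
                have hpE : p ∉ E := (Finset.mem_filter.1 hE).2
                have hsp := Finset.card_filter_add_card_filter_not
                  (s := 𝒰.filter fun x => ¬ φ x ⊆ E) (p := fun x => p ∈ φ x)
                have e1 : (𝒰.filter fun x => ¬ φ x ⊆ E).filter (fun x => p ∈ φ x)
                    = 𝒰.filter (fun x => p ∈ φ x) := by
                  rw [Finset.filter_filter]
                  apply Finset.filter_congr
                  intro x _
                  constructor
                  · exact And.right
                  · intro h; exact ⟨fun hsub => hpE (hsub h), h⟩
                have e2 : (𝒰.filter fun x => ¬ φ x ⊆ E).filter (fun x => ¬ p ∈ φ x)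
                    = (𝒰.filter fun x => p ∉ φ x).filter (fun x => ¬ φ x ⊆ E) := by
                  rw [Finset.filter_filter, Finset.filter_filter]
                  exact Finset.filter_congr (fun x _ => and_comm)
                rw [e1, e2, h2 E hEℰ] at hsp
                omega
              have hrec := ih (ρ - u) (r' + 1) (by omega) (𝒰.filter fun x => p ∉ φ x) φ ℰ₂
                (fun E hE => h1 E (Finset.mem_filter.1 hE).1)
                hkey
                (by
                  intro E hE q hq
                  have hEℰ : E ∈ ℰ := (Finset.mem_filter.1 hE).1
                  have hpE : p ∉ E := (Finset.mem_filter.1 hE).2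
                  obtain ⟨x, hxU, hqφ, hφE⟩ := h3 E hEℰ q hq
                  exact ⟨x, Finset.mem_filter.2 ⟨hxU, fun hpx => hpE (hφE hpx)⟩, hqφ, hφE⟩)
              calc ℰ₂.card ≤ (ρ - u + (r' + 1)).choose (r' + 1) := hrec
                _ ≤ (ρ + r').choose (r' + 1) := Nat.choose_le_choose _ (by omega)
          calc ℰ.card = ℰ₁.card + ℰ₂.card := hsplit.symm
            _ ≤ (ρ + r').choose r' + (ρ + r').choose (r' + 1) := Nat.add_le_add hbound1 hbound2
            _ = (ρ + r' + 1).choose (r' + 1) := (Nat.choose_succ_succ _ _).symm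
            _ = (ρ + (r' + 1)).choose (r' + 1) := by ring_nf

end AbstractLemma


/-- there is an absolute constant `γ'' > 0` such that in any
`d`-regular bipartite graph, for integers `w` and `t ≥ 1` and any
`(S,T) ∈ 2^X × 2^Y` with `|S| ≤ |T|`, the number of `A ∈ 𝒢(w,t)` with
`[A] ⊆ S` and `T ⊆ N(A)` is at most `2^{w-γ''t}`. -/
theorem stmt_18 :
    ∃ γ'' : ℝ, 0 < γ'' ∧
      ∀ (V : Type) [Fintype V] [DecidableEq V] (G : SimpleGraph V)
        (X Y : Finset V) (d : ℕ),
        IsBipartiteWith G X Y → IsRegularDeg G d →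
        ∀ w t : ℤ, 1 ≤ t → ∀ S T : Finset V, S.card ≤ T.card →
          (((GG G X w t).filter
              (fun A => cl G X A ⊆ S ∧ T ⊆ nbr G A)).card : ℝ)
            ≤ (2:ℝ) ^ ((w : ℝ) - γ'' * (t : ℝ)) := by
  
  classical
  refine ⟨1/10, by norm_num, ?_⟩
  intro V _inst1 _inst2 G X Y d _hbip _hreg w t ht S T hST
  have hRpos : (0:ℝ) < (2:ℝ) ^ ((w : ℝ) - 1/10 * (t : ℝ)) :=
    Real.rpow_pos_of_pos (by norm_num) _
  set 𝒜 := (GG G X w t).filter (fun A => cl G X A ⊆ S ∧ T ⊆ nbr G A) with h𝒜def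
  rcases 𝒜.eq_empty_or_nonempty with hemp | ⟨A₀, hA₀⟩
  · rw [hemp]
    simpa using hRpos.le
  -- basic membership facts
  have hmem : ∀ A ∈ 𝒜, A ⊆ X ∧ ((nbr G A).card : ℤ) = w ∧
      ((nbr G A).card : ℤ) - ((cl G X A).card : ℤ) = t ∧ cl G X A ⊆ S ∧ T ⊆ nbr G A := by
    intro A hA
    rw [h𝒜def, Finset.mem_filter] at hA
    have hGG := hA.1
    simp only [GG, Finset.mem_filter, Finset.mem_powerset] at hGG
    exact ⟨hGG.1, hGG.2.2.2.1, hGG.2.2.2.2, hA.2.1, hA.2.2⟩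
  have hclmem : ∀ (A : Finset V) (x : V), x ∈ cl G X A ↔ x ∈ X ∧ nbrF G x ⊆ nbr G A := by
    intro A x; simp [cl]
  have hnbrmem : ∀ (B : Finset V) (y : V), y ∈ nbr G B ↔ ∃ a ∈ B, G.Adj a y := by
    intro B y; simp [nbr]
  have hnbrFmem : ∀ (x y : V), y ∈ nbrF G x ↔ G.Adj x y := by
    intro x y; simp [nbrF]
  have hsubcl : ∀ A ∈ 𝒜, A ⊆ cl G X A := by
    intro A hA a ha
    rw [hclmem]
    refine ⟨(hmem A hA).1 ha, ?_⟩
    intro y hy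
    rw [hnbrFmem] at hy
    rw [hnbrmem]
    exact ⟨a, ha, hy⟩
  -- numbers
  set wn := (nbr G A₀).card with hwn
  set cn := (cl G X A₀).card with hcn
  have hA₀m := hmem A₀ hA₀
  have hwZ : (wn : ℤ) = w := hA₀m.2.1
  have hcZ : (wn : ℤ) - (cn : ℤ) = t := hA₀m.2.2.1
  have hcnlt : cn < wn := by omega
  set tn := wn - cn with htn
  have htZ : (tn : ℤ) = t := by omega
  have hwR : (w : ℝ) = (wn : ℝ) := by exact_mod_cast hwZ.symm
  have htR : (t : ℝ) = (tn : ℝ) := by exact_mod_cast htZ.symm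
  have hnbrcard : ∀ A ∈ 𝒜, (nbr G A).card = wn := by
    intro A hA
    have h' := (hmem A hA).2.1
    omega
  have hclcard : ∀ A ∈ 𝒜, (cl G X A).card = cn := by
    intro A hA
    have h1' := (hmem A hA).2.1
    have h2' := (hmem A hA).2.2.1
    omega
  -- the common neighborhood Q and the union of closures U
  set Q := Finset.univ.filter (fun y => ∀ A ∈ 𝒜, y ∈ nbr G A) with hQdef
  set U := 𝒜.biUnion (fun A => cl G X A) with hUdef
  have hQsub : ∀ A ∈ 𝒜, Q ⊆ nbr G A := by
    intro A hA y hy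
    rw [hQdef, Finset.mem_filter] at hy
    exact hy.2 A hA
  have hTQ : T ⊆ Q := by
    intro y hy
    rw [hQdef, Finset.mem_filter]
    exact ⟨Finset.mem_univ _, fun A hA => (hmem A hA).2.2.2.2 hy⟩
  have hclU : ∀ A ∈ 𝒜, cl G X A ⊆ U := by
    intro A hA
    rw [hUdef]
    exact Finset.subset_biUnion_of_mem _ hA
  have hUS : U ⊆ S := by
    rw [hUdef]
    exact Finset.biUnion_subset.2 (fun A hA => (hmem A hA).2.2.2.1)
  have hUX : U ⊆ X := by
    rw [hUdef]
    refine Finset.biUnion_subset.2 (fun A hA => ?_)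
    intro x hx
    exact ((hclmem A x).1 hx).1
  have hQw : Q.card ≤ wn := by
    have h' := Finset.card_le_card (hQsub A₀ hA₀)
    rwa [← hwn] at h'
  have hcnU : cn ≤ U.card := by
    have h' := Finset.card_le_card (hclU A₀ hA₀)
    rwa [← hcn] at h'
  have hUQ : U.card ≤ Q.card :=
    le_trans (Finset.card_le_card hUS) (le_trans hST (Finset.card_le_card hTQ))
  set r := wn - Q.card with hrdef
  set ρ := U.card - cn with hρdef
  have hρr : ρ + r ≤ tn := by omega
  by_cases hcase : tn ≤ 10 * r
  · -- Case 1 : the common neighborhood is substantially smaller than w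
    have hsubU : 𝒜 ⊆ U.powerset := fun A hA =>
      Finset.mem_powerset.2 ((hsubcl A hA).trans (hclU A hA))
    have hn1 : 𝒜.card ≤ 2 ^ U.card := by
      calc 𝒜.card ≤ U.powerset.card := Finset.card_le_card hsubU
        _ = 2 ^ U.card := Finset.card_powerset U
    have hexp : (U.card : ℝ) ≤ (w : ℝ) - 1/10 * (t : ℝ) := by
      rw [hwR, htR]
      have c1 : (U.card : ℝ) ≤ (Q.card : ℝ) := by exact_mod_cast hUQ
      have c2 : (Q.card : ℝ) + (r : ℝ) = (wn : ℝ) := by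
        exact_mod_cast (by omega : Q.card + r = wn)
      have c3 : (tn : ℝ) ≤ 10 * (r : ℝ) := by exact_mod_cast hcase
      linarith
    calc (𝒜.card : ℝ) ≤ ((2 ^ U.card : ℕ) : ℝ) := by exact_mod_cast hn1
      _ = (2:ℝ) ^ ((U.card : ℕ) : ℝ) := by rw [Real.rpow_natCast]; norm_cast
      _ ≤ (2:ℝ) ^ ((w : ℝ) - 1/10 * (t : ℝ)) :=
          Real.rpow_le_rpow_of_exponent_le one_le_two hexp
  · -- Case 2 : use the abstract counting lemma
    have h10r : 10 * r < tn := by omega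
    set φ : V → Finset V := fun x => nbrF G x \ Q with hφdef
    set ℰ := 𝒜.image (fun A => nbr G A \ Q) with hℰdef
    have hh1 : ∀ E ∈ ℰ, E.card = r := by
      intro E hE
      obtain ⟨A, hA, rfl⟩ := Finset.mem_image.1 hE
      rw [Finset.card_sdiff_of_subset (hQsub A hA), hnbrcard A hA]
    have hiff : ∀ A ∈ 𝒜, ∀ x ∈ U, (φ x ⊆ nbr G A \ Q ↔ x ∈ cl G X A) := by
      intro A hA x hxU
      constructor
      · intro hsub
        rw [hclmem]
        refine ⟨hUX hxU, ?_⟩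
        intro y hy
        by_cases hyQ : y ∈ Q
        · exact hQsub A hA hyQ
        · have hmem' : y ∈ φ x := by
            rw [hφdef]
            exact Finset.mem_sdiff.2 ⟨hy, hyQ⟩
          exact (Finset.mem_sdiff.1 (hsub hmem')).1
      · intro hxcl y hy
        rw [hφdef] at hy
        obtain ⟨hy1, hy2⟩ := Finset.mem_sdiff.1 hy
        exact Finset.mem_sdiff.2 ⟨((hclmem A x).1 hxcl).2 hy1, hy2⟩
    have hh2 : ∀ E ∈ ℰ, (U.filter fun x => ¬ φ x ⊆ E).card = ρ := by
      intro E hE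
      obtain ⟨A, hA, rfl⟩ := Finset.mem_image.1 hE
      have hfeq : U.filter (fun x => φ x ⊆ nbr G A \ Q) = cl G X A := by
        rw [Finset.filter_congr (hiff A hA), Finset.filter_mem_eq_inter,
          Finset.inter_eq_right.2 (hclU A hA)]
      have hsp := Finset.card_filter_add_card_filter_not
        (s := U) (p := fun x => φ x ⊆ nbr G A \ Q)
      rw [hfeq, hclcard A hA] at hsp
      omega
    have hh3 : ∀ E ∈ ℰ, ∀ p ∈ E, ∃ x ∈ U, p ∈ φ x ∧ φ x ⊆ E := by
      intro E hE p hp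
      obtain ⟨A, hA, rfl⟩ := Finset.mem_image.1 hE
      obtain ⟨hpn, hpQ⟩ := Finset.mem_sdiff.1 hp
      obtain ⟨a, haA, hadj⟩ := (hnbrmem A p).1 hpn
      refine ⟨a, hclU A hA (hsubcl A hA haA), ?_, ?_⟩
      · rw [hφdef]
        exact Finset.mem_sdiff.2 ⟨(hnbrFmem a p).2 hadj, hpQ⟩
      · intro y hy
        rw [hφdef] at hy
        obtain ⟨hy1, hy2⟩ := Finset.mem_sdiff.1 hy
        refine Finset.mem_sdiff.2 ⟨?_, hy2⟩
        exact (hnbrmem A y).2 ⟨a, haA, (hnbrFmem a y).1 hy1⟩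
    have habs : ℰ.card ≤ (ρ + r).choose r :=
      abstract_count (ρ + r) ρ r le_rfl U φ ℰ hh1 hh2 hh3
    have hmaps : ∀ A ∈ 𝒜, (nbr G A \ Q) ∈ ℰ := by
      intro A hA
      rw [hℰdef]
      exact Finset.mem_image_of_mem _ hA
    have hfib : ∀ E ∈ ℰ, (𝒜.filter fun A => nbr G A \ Q = E).card ≤ 2 ^ cn := by
      intro E _
      rcases (𝒜.filter fun A => nbr G A \ Q = E).eq_empty_or_nonempty with hfe | ⟨A₁, hA₁⟩
      · rw [hfe]; simp
      · obtain ⟨hA₁𝒜, hA₁E⟩ := Finset.mem_filter.1 hA₁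
        have hsub2 : (𝒜.filter fun A => nbr G A \ Q = E) ⊆ (cl G X A₁).powerset := by
          intro A hA'
          obtain ⟨hA𝒜, hAE⟩ := Finset.mem_filter.1 hA'
          have hnbreq : nbr G A = nbr G A₁ := by
            have e1 := Finset.sdiff_union_of_subset (hQsub A hA𝒜)
            have e2 := Finset.sdiff_union_of_subset (hQsub A₁ hA₁𝒜)
            rw [← e1, ← e2, hAE, hA₁E]
          have hcleq : cl G X A = cl G X A₁ := by
            simp only [cl, hnbreq]
          exact Finset.mem_powerset.2 (hcleq ▸ hsubcl A hA𝒜)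
        calc (𝒜.filter fun A => nbr G A \ Q = E).card
            ≤ (cl G X A₁).powerset.card := Finset.card_le_card hsub2
          _ = 2 ^ cn := by rw [Finset.card_powerset, hclcard A₁ hA₁𝒜]
    have hcount : 𝒜.card ≤ ℰ.card * 2 ^ cn := by
      rw [Finset.card_eq_sum_card_fiberwise hmaps]
      calc (∑ E ∈ ℰ, (𝒜.filter fun A => nbr G A \ Q = E).card)
          ≤ ℰ.card • 2 ^ cn := Finset.sum_le_card_nsmul _ _ _ hfib
        _ = ℰ.card * 2 ^ cn := by rw [smul_eq_mul]
    -- numeric bounds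
    have hCb : (((ρ + r).choose r : ℕ) : ℝ) ≤ (9/8 : ℝ) ^ tn * 8 ^ r := by
      have hterm : (1/8 : ℝ) ^ r * 1 ^ ((ρ + r) - r) * (((ρ + r).choose r : ℕ) : ℝ)
          ≤ (9/8 : ℝ) ^ (ρ + r) := by
        have hpow := add_pow (1/8 : ℝ) 1 (ρ + r)
        have h98 : (1/8 + 1 : ℝ) = 9/8 := by norm_num
        rw [h98] at hpow
        rw [hpow]
        exact Finset.single_le_sum
          (f := fun k => (1/8:ℝ)^k * 1^((ρ+r)-k) * (((ρ+r).choose k : ℕ):ℝ))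
          (fun i _ => by positivity)
          (Finset.mem_range.2 (Nat.lt_succ_of_le (Nat.le_add_left r ρ)))
      have h8 : (1/8 : ℝ) ^ r * 8 ^ r = 1 := by
        rw [← mul_pow]; norm_num
      have step1 : (((ρ + r).choose r : ℕ) : ℝ) ≤ (9/8 : ℝ) ^ (ρ + r) * 8 ^ r := by
        have h0 : (0:ℝ) ≤ 8 ^ r := by positivity
        calc (((ρ + r).choose r : ℕ) : ℝ)
            = (((ρ + r).choose r : ℕ) : ℝ) * ((1/8:ℝ)^r * 8^r) := by rw [h8, mul_one]
          _ = ((1/8:ℝ)^r * 1^((ρ+r)-r) * (((ρ+r).choose r : ℕ):ℝ)) * 8^r := by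
              rw [one_pow]; ring
          _ ≤ (9/8:ℝ)^(ρ+r) * 8^r := mul_le_mul_of_nonneg_right hterm h0
      calc (((ρ + r).choose r : ℕ) : ℝ) ≤ (9/8 : ℝ) ^ (ρ + r) * 8 ^ r := step1
        _ ≤ (9/8 : ℝ) ^ tn * 8 ^ r := by
            apply mul_le_mul_of_nonneg_right _ (by positivity)
            exact pow_le_pow_right₀ (by norm_num) hρr
    have hkey : (9/8 : ℝ) ^ tn * 8 ^ r ≤ (2:ℝ) ^ ((9/10 : ℝ) * (tn : ℝ)) := by
      have hYnn : (0:ℝ) ≤ (2:ℝ) ^ ((9/10 : ℝ) * (tn : ℝ)) :=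
        (Real.rpow_pos_of_pos (by norm_num) _).le
      apply le_of_pow_le_pow_left₀ (n := 10) (by norm_num) hYnn
      have hR10 : ((2:ℝ) ^ ((9/10 : ℝ) * (tn : ℝ))) ^ (10 : ℕ) = (2:ℝ) ^ (9 * tn) := by
        rw [← Real.rpow_natCast ((2:ℝ) ^ ((9/10 : ℝ) * (tn : ℝ))) 10,
          ← Real.rpow_mul (by norm_num : (0:ℝ) ≤ 2),
          ← Real.rpow_natCast 2 (9 * tn)]
        congr 1
        push_cast
        ring
      rw [hR10]
      calc ((9/8 : ℝ) ^ tn * 8 ^ r) ^ (10:ℕ)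
          = (9/8 : ℝ) ^ (tn * 10) * 8 ^ (r * 10) := by
            rw [mul_pow, ← pow_mul, ← pow_mul]
        _ ≤ (9/8 : ℝ) ^ (tn * 10) * 8 ^ tn := by
            apply mul_le_mul_of_nonneg_left _ (by positivity)
            exact pow_le_pow_right₀ (by norm_num) (by omega)
        _ = ((9/8 : ℝ) ^ 10 * 8) ^ tn := by
            rw [mul_pow, ← pow_mul, mul_comm tn 10]
        _ ≤ ((2:ℝ) ^ 9) ^ tn := by
            apply pow_le_pow_left₀ (by positivity) _ tn
            norm_num
        _ = (2:ℝ) ^ (9 * tn) := by rw [← pow_mul]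
    have hcnR : (cn : ℝ) + (tn : ℝ) = (wn : ℝ) := by
      exact_mod_cast (by omega : cn + tn = wn)
    have hexp2 : (9/10 : ℝ) * (tn : ℝ) + (cn : ℝ) = (w:ℝ) - 1/10 * (t:ℝ) := by
      rw [hwR, htR]; linarith
    calc (𝒜.card : ℝ) ≤ ((ℰ.card * 2 ^ cn : ℕ) : ℝ) := by exact_mod_cast hcount
      _ = (ℰ.card : ℝ) * (2:ℝ) ^ (cn : ℕ) := by push_cast; ring
      _ ≤ (((ρ+r).choose r : ℕ) : ℝ) * (2:ℝ) ^ (cn:ℕ) := by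
          apply mul_le_mul_of_nonneg_right _ (by positivity)
          exact_mod_cast habs
      _ ≤ ((9/8:ℝ)^tn * 8^r) * (2:ℝ)^(cn:ℕ) :=
          mul_le_mul_of_nonneg_right hCb (by positivity)
      _ ≤ ((2:ℝ) ^ ((9/10:ℝ) * (tn:ℝ))) * (2:ℝ)^(cn:ℕ) :=
          mul_le_mul_of_nonneg_right hkey (by positivity)
      _ = (2:ℝ) ^ ((9/10:ℝ) * (tn:ℝ) + (cn:ℝ)) := by
          rw [Real.rpow_add (by norm_num : (0:ℝ) < 2), Real.rpow_natCast]
      _ = (2:ℝ) ^ ((w:ℝ) - 1/10 * (t:ℝ)) := by rw [hexp2]
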